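/- Let A = (1, a_1, …, a_k) be an orderly currency. If indices 0 ≤ i < j ≤ k and 0 ≤ l < m ≤ k satisfy a_m − a_{l+1} < a_j − a_i < a_m − a_l, then j < k and a_{j+1} ≤ a_i + a_m. -/
import Mathlib


/-- The largest coin of the currency with coins `a 0, …, a k` that is `≤ c`
(or `0` if there is none). -/
def bestCoin (a : ℕ → ℕ) (k : ℕ) (c : ℕ) : ℕ :=
  ((Finset.range (k + 1)).filter fun j => a j ≤ c).sup a

/-- The number of coins used by the greedy algorithm to pay the amount `c`,
using the currency with coins `a 0, …, a k`. -/
def grd (a : ℕ → ℕ) (k : ℕ) : ℕ → ℕ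
  | 0 => 0
  | c + 1 =>
    if h : 1 ≤ bestCoin a k (c + 1) then
      grd a k (c + 1 - bestCoin a k (c + 1)) + 1
    else 0
  decreasing_by omega

/-- The minimal number of coins needed to pay the amount `c`,
using the currency with coins `a 0, …, a k`. -/
noncomputable def opt (a : ℕ → ℕ) (k : ℕ) (c : ℕ) : ℕ :=
  sInf {n | ∃ x : Fin (k + 1) → ℕ, (∑ i, x i) = n ∧ (∑ i, x i * a i.1) = c}

/-- `a 0, …, a k` is a currency: it starts with the coin `1` and is strictly increasing. -/
def IsCurrency (a : ℕ → ℕ) (k : ℕ) : Prop :=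
  a 0 = 1 ∧ ∀ i j : ℕ, i < j → j ≤ k → a i < a j

/-- The currency with coins `a 0, …, a k` is orderly: the greedy payment is
optimal for every positive amount. -/
def Orderly (a : ℕ → ℕ) (k : ℕ) : Prop :=
  ∀ c : ℕ, 0 < c → opt a k c = grd a k c

/-- The set `𝒜(a) = ⋃_{m ≥ 1} {m·a − l : 0 ≤ l ≤ m}`. -/
def calA (a : ℕ) : Set ℕ :=
  {x | ∃ m l : ℕ, 1 ≤ m ∧ l ≤ m ∧ x = m * a - l}


lemma bestCoin_ge (a : ℕ → ℕ) (k s c : ℕ) (hs : s ≤ k) (hsc : a s ≤ c) :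
    a s ≤ bestCoin a k c :=
  Finset.le_sup (Finset.mem_filter.mpr ⟨Finset.mem_range.mpr (by omega), hsc⟩)

lemma bestCoin_ex (a : ℕ → ℕ) (k c : ℕ) (h0 : a 0 = 1) (hc : 1 ≤ c) :
    ∃ t, t ≤ k ∧ a t ≤ c ∧ bestCoin a k c = a t := by
  have hne : ((Finset.range (k + 1)).filter fun j => a j ≤ c).Nonempty :=
    ⟨0, Finset.mem_filter.mpr ⟨Finset.mem_range.mpr (by omega), by omega⟩⟩
  obtain ⟨t, ht, heq⟩ := Finset.exists_mem_eq_sup _ hne a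
  simp only [Finset.mem_filter, Finset.mem_range] at ht
  exact ⟨t, by omega, ht.2, heq⟩

lemma grd_succ (a : ℕ → ℕ) (k c : ℕ) (h : 1 ≤ bestCoin a k (c+1)) :
    grd a k (c+1) = grd a k (c + 1 - bestCoin a k (c+1)) + 1 := by
  rw [grd]; simp [h]

lemma grd_pos (a : ℕ → ℕ) (k : ℕ) (h0 : a 0 = 1) (c : ℕ) (hc : 0 < c) :
    1 ≤ grd a k c := by
  obtain ⟨c', rfl⟩ : ∃ c', c = c' + 1 := ⟨c - 1, by omega⟩
  have hb : 1 ≤ bestCoin a k (c' + 1) := by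
    have := bestCoin_ge a k 0 (c' + 1) (by omega) (by omega)
    omega
  rw [grd_succ a k c' hb]; omega

lemma grd_eq (a : ℕ → ℕ) (k c b : ℕ) (hc : 0 < c) (hb : 1 ≤ b)
    (hbc : bestCoin a k c = b) : grd a k c = grd a k (c - b) + 1 := by
  obtain ⟨c', rfl⟩ : ∃ c', c = c' + 1 := ⟨c - 1, by omega⟩
  rw [grd_succ a k c' (by omega), hbc]

/-- If `(1, a 1, …, a k)` is orderly and
`a m - a (l+1) < a j - a i < a m - a l` with `i < j ≤ k` and `l < m ≤ k`, then
`j < k` and `a (j+1) ≤ a i + a m`. -/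
theorem aux_between_gaps (a : ℕ → ℕ) (k : ℕ)
    (hcur : IsCurrency a k) (hord : Orderly a k)
    (i j l m : ℕ) (hij : i < j) (hjk : j ≤ k) (hlm : l < m) (hmk : m ≤ k)
    (h1 : a m - a (l + 1) < a j - a i) (h2 : a j - a i < a m - a l) :
    j < k ∧ a (j + 1) ≤ a i + a m := by
  obtain ⟨h0, hmono⟩ := hcur
  have hle : ∀ s t : ℕ, s ≤ t → t ≤ k → a s ≤ a t := by
    intro s t hst htk
    rcases eq_or_lt_of_le hst with rfl | h
    · exact le_rfl
    · exact (hmono s t h htk).le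
  have h1k : 1 ≤ a l := by have := hle 0 l (by omega) (by omega); omega
  have h1i : 1 ≤ a i := by have := hle 0 i (by omega) (by omega); omega
  have hij' : a i < a j := hmono i j hij hjk
  have hll : a l < a (l+1) := hmono l (l+1) (by omega) (by omega)
  have hl1m : a (l+1) ≤ a m := hle (l+1) m (by omega) hmk
  have hkey1 : a j + a l < a i + a m := by omega
  have hkey2 : a i + a m < a j + a (l+1) := by omega
  by_contra hcon
  push_neg at hcon
  -- bestCoin of c := a i + a m is a j
  have hajc : a j ≤ a i + a m := by omega
  obtain ⟨t, htk, htc, hbt⟩ := bestCoin_ex a k (a i + a m) h0 (by omega)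
  have hjt : a j ≤ a t := hbt ▸ bestCoin_ge a k j (a i + a m) hjk hajc
  have htj : a t = a j := by
    rcases lt_trichotomy t j with h | h | h
    · exact absurd hjt (by simpa using hmono t j h hjk)
    · rw [h]
    · have hjk' : j < k := by omega
      have h2t : a (j+1) ≤ a t := hle (j+1) t (by omega) htk
      have := hcon hjk'
      omega
  rw [htj] at hbt
  have hgc : grd a k (a i + a m) = grd a k (a i + a m - a j) + 1 :=
    grd_eq a k (a i + a m) (a j) (by omega) (by omega) hbt
  have hrl : a l < a i + a m - a j ∧ a i + a m - a j < a (l+1) := by omega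
  -- bestCoin of the remainder
  obtain ⟨s, hsk, hsr, hbs⟩ := bestCoin_ex a k (a i + a m - a j) h0 (by omega)
  have hsl : a s ≤ a l := by
    by_contra hso
    have hls : l + 1 ≤ s := by
      by_contra h'
      have := hle s l (by omega) (by omega); omega
    have := hle (l+1) s hls hsk
    omega
  have h1s : 1 ≤ a s := by have := hle 0 s (by omega) hsk; omega
  have hgr : grd a k (a i + a m - a j)
      = grd a k (a i + a m - a j - a s) + 1 :=
    grd_eq a k (a i + a m - a j) (a s) (by omega) (by omega) hbs
  have hpos : 1 ≤ grd a k (a i + a m - a j - a s) :=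
    grd_pos a k h0 _ (by omega)
  -- opt (a i + a m) ≤ 2
  have hopt : opt a k (a i + a m) ≤ 2 := by
    apply Nat.sInf_le
    refine ⟨fun f => (if f = (⟨i, by omega⟩ : Fin (k+1)) then 1 else 0) +
      (if f = (⟨m, by omega⟩ : Fin (k+1)) then 1 else 0), ?_, ?_⟩
    · simp [Finset.sum_add_distrib, Finset.sum_ite_eq']
    · simp [add_mul, ite_mul, Finset.sum_add_distrib, Finset.sum_ite_eq']
  have := hord (a i + a m) (by omega)
  omega
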